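/- Let G be a connected finite simple graph with at least 2 vertices and let v be a vertex of G. Then v is the L-root leaf of some GS ordering of G if and only if v is not a cut vertex of G. -/
import Mathlib


open SimpleGraph

variable {V : Type*}

/-- A generic search (GS) ordering: every vertex other than the first has an
earlier neighbor. -/
def IsGSOrdering [Fintype V] (G : SimpleGraph V) (σ : Fin (Fintype.card V) ≃ V) : Prop :=
  ∀ w : V, (σ.symm w).val ≠ 0 → ∃ u : V, σ.symm u < σ.symm w ∧ G.Adj u w

/-- DFS ordering (Corneil–Krueger four-point characterization). -/
def IsDFSOrdering [Fintype V] (G : SimpleGraph V) (σ : Fin (Fintype.card V) ≃ V) : Prop :=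
  IsGSOrdering G σ ∧ ∀ a b c : V, σ.symm a < σ.symm b → σ.symm b < σ.symm c →
    G.Adj a c → ¬ G.Adj a b →
      ∃ d : V, σ.symm a < σ.symm d ∧ σ.symm d < σ.symm b ∧ G.Adj d b

/-- BFS ordering (Corneil–Krueger four-point characterization). -/
def IsBFSOrdering [Fintype V] (G : SimpleGraph V) (σ : Fin (Fintype.card V) ≃ V) : Prop :=
  IsGSOrdering G σ ∧ ∀ a b c : V, σ.symm a < σ.symm b → σ.symm b < σ.symm c →
    G.Adj a c → ¬ G.Adj a b →
      ∃ d : V, σ.symm d < σ.symm a ∧ G.Adj d b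

/-- LDFS ordering (Corneil–Krueger four-point characterization). -/
def IsLDFSOrdering [Fintype V] (G : SimpleGraph V) (σ : Fin (Fintype.card V) ≃ V) : Prop :=
  IsGSOrdering G σ ∧ ∀ a b c : V, σ.symm a < σ.symm b → σ.symm b < σ.symm c →
    G.Adj a c → ¬ G.Adj a b →
      ∃ d : V, σ.symm a < σ.symm d ∧ σ.symm d < σ.symm b ∧ G.Adj d b ∧ ¬ G.Adj d c

/-- MNS ordering (Corneil–Krueger four-point characterization). -/
def IsMNSOrdering [Fintype V] (G : SimpleGraph V) (σ : Fin (Fintype.card V) ≃ V) : Prop :=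
  IsGSOrdering G σ ∧ ∀ a b c : V, σ.symm a < σ.symm b → σ.symm b < σ.symm c →
    G.Adj a c → ¬ G.Adj a b →
      ∃ d : V, σ.symm d < σ.symm b ∧ G.Adj d b ∧ ¬ G.Adj d c

/-- MCS ordering: for positions `i < j`, the vertex at position `i` has at least as many
neighbors among the vertices at positions `< i` as the vertex at position `j` has. -/
def IsMCSOrdering [Fintype V] (G : SimpleGraph V) (σ : Fin (Fintype.card V) ≃ V) : Prop :=
  ∀ i j : Fin (Fintype.card V), i < j →
    Nat.card {k : Fin (Fintype.card V) // k < i ∧ G.Adj (σ k) (σ j)} ≤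
    Nat.card {k : Fin (Fintype.card V) // k < i ∧ G.Adj (σ k) (σ i)}

/-- A perfect elimination ordering: the earlier neighbors of any vertex form a clique. -/
def IsPEO [Fintype V] (G : SimpleGraph V) (σ : Fin (Fintype.card V) ≃ V) : Prop :=
  ∀ u v w : V, σ.symm u < σ.symm w → σ.symm v < σ.symm w → u ≠ v →
    G.Adj u w → G.Adj v w → G.Adj u v

/-- `u` is the F-parent of `v`: `v` is not the first vertex and `u` is the earliest
neighbor of `v` in the ordering. -/
def FParent [Fintype V] (G : SimpleGraph V) (σ : Fin (Fintype.card V) ≃ V) (u v : V) : Prop :=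
  (σ.symm v).val ≠ 0 ∧ G.Adj u v ∧ ∀ w : V, G.Adj w v → σ.symm u ≤ σ.symm w

/-- `u` is the L-parent of `v`: `v` is not the first vertex and `u` is the last
neighbor of `v` occurring before `v` in the ordering. -/
def LParent [Fintype V] (G : SimpleGraph V) (σ : Fin (Fintype.card V) ≃ V) (u v : V) : Prop :=
  (σ.symm v).val ≠ 0 ∧ G.Adj u v ∧ σ.symm u < σ.symm v ∧
    ∀ w : V, G.Adj w v → σ.symm w < σ.symm v → σ.symm w ≤ σ.symm u

/-- `v` is an F-branch leaf: `v` is not the first vertex and is the F-parent of no vertex. -/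
def FBranchLeaf [Fintype V] (G : SimpleGraph V) (σ : Fin (Fintype.card V) ≃ V) (v : V) : Prop :=
  (σ.symm v).val ≠ 0 ∧ ∀ w : V, ¬ FParent G σ v w

/-- `v` is the F-root leaf: `v` is the first vertex and is the F-parent of exactly one vertex. -/
def FRootLeaf [Fintype V] (G : SimpleGraph V) (σ : Fin (Fintype.card V) ≃ V) (v : V) : Prop :=
  (σ.symm v).val = 0 ∧ ∃! w : V, FParent G σ v w

/-- `v` is an L-branch leaf: `v` is not the first vertex and is the L-parent of no vertex. -/
def LBranchLeaf [Fintype V] (G : SimpleGraph V) (σ : Fin (Fintype.card V) ≃ V) (v : V) : Prop :=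
  (σ.symm v).val ≠ 0 ∧ ∀ w : V, ¬ LParent G σ v w

/-- `v` is the L-root leaf: `v` is the first vertex and is the L-parent of exactly one vertex. -/
def LRootLeaf [Fintype V] (G : SimpleGraph V) (σ : Fin (Fintype.card V) ≃ V) (v : V) : Prop :=
  (σ.symm v).val = 0 ∧ ∃! w : V, LParent G σ v w

/-- `v` is an L-leaf: the L-root leaf or an L-branch leaf. -/
def LLeaf [Fintype V] (G : SimpleGraph V) (σ : Fin (Fintype.card V) ≃ V) (v : V) : Prop :=
  LRootLeaf G σ v ∨ LBranchLeaf G σ v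

/-- `v` is the end-vertex (last vertex) of the ordering `σ`. -/
def IsEndVertex [Fintype V] (σ : Fin (Fintype.card V) ≃ V) (v : V) : Prop :=
  (σ.symm v).val = Fintype.card V - 1

/-- `v` is a cut vertex: deleting `v` yields a disconnected graph. -/
def CutVertex (G : SimpleGraph V) (v : V) : Prop :=
  ¬ (G.induce {w : V | w ≠ v}).Connected

/-- A graph is chordal if every cycle of length at least 4 has a chord, i.e. an edge of the
graph joining two vertices of the cycle which is not an edge of the cycle. -/
def IsChordal (G : SimpleGraph V) : Prop :=
  ∀ ⦃v : V⦄ (w : G.Walk v v), w.IsCycle → 4 ≤ w.length →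
    ∃ x y : V, x ∈ w.support ∧ y ∈ w.support ∧ G.Adj x y ∧ s(x, y) ∉ w.edges

lemma exists_closer {W : Type*} {H : SimpleGraph W} (hH : H.Connected) (a b : W) (hab : b ≠ a) :
    ∃ c : W, H.Adj c b ∧ H.dist a c + 1 ≤ H.dist a b := by
  obtain ⟨p, hp⟩ := (hH a b).exists_walk_length_eq_dist
  have hlen : p.length ≠ 0 := fun h => hab (p.eq_of_length_eq_zero h).symm
  have hnil : ¬ p.reverse.Nil := by
    rw [SimpleGraph.Walk.nil_iff_length_eq, SimpleGraph.Walk.length_reverse]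
    exact hlen
  refine ⟨p.reverse.getVert 1, (p.reverse.adj_snd hnil).symm, ?_⟩
  have h1 : H.dist (p.reverse.getVert 1) a ≤ p.reverse.tail.length :=
    SimpleGraph.dist_le p.reverse.tail
  have h2 : p.reverse.tail.length + 1 = p.length := by
    rw [SimpleGraph.Walk.length_tail_add_one hnil, SimpleGraph.Walk.length_reverse]
  rw [SimpleGraph.dist_comm]
  omega

/-- `v` is the L-root leaf of some GS ordering iff `v` is not a cut vertex. -/
theorem stmt3 [Fintype V] (G : SimpleGraph V)
    (hG : G.Connected) (hn : 2 ≤ Fintype.card V) (v : V) :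
    (∃ σ : Fin (Fintype.card V) ≃ V, IsGSOrdering G σ ∧ LRootLeaf G σ v) ↔
      ¬ CutVertex G v := by
  classical
  haveI : NeZero (Fintype.card V) := ⟨by omega⟩
  set n := Fintype.card V with hncard
  have hval0 : ((0 : Fin n) : ℕ) = 0 := by simp
  have hzero_le : ∀ i : Fin n, (0 : Fin n) ≤ i := fun i => by
    rw [Fin.le_def, hval0]; exact Nat.zero_le _
  have hpos : ∀ i : Fin n, i ≠ 0 → 0 < i := fun i hi => by
    rw [Fin.lt_def, hval0]
    exact Nat.pos_of_ne_zero (fun h => hi (Fin.ext (by rw [h, hval0])))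
  constructor
  · rintro ⟨σ, hGS, h0, w0, hw0, huniq⟩
    have hsv : σ.symm v = 0 := Fin.ext h0
    have hw0v : w0 ≠ v := hw0.2.1.ne'
    unfold CutVertex
    rw [not_not]
    have claim : ∀ k : ℕ, ∀ u : V, (σ.symm u).val = k → ∀ hu : u ≠ v,
        (G.induce {w : V | w ≠ v}).Reachable ⟨w0, hw0v⟩ ⟨u, hu⟩ := by
      intro k
      induction k using Nat.strong_induction_on with
      | _ k IH =>
        intro u hk hu
        have hne0 : σ.symm u ≠ 0 := by
          intro h; exact hu (σ.symm.injective (h.trans hsv.symm))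
        obtain ⟨x, hx1, hx2⟩ := hGS u (fun h => hne0 (Fin.ext h))
        set P : Finset (Fin n) :=
          Finset.univ.filter (fun i : Fin n => G.Adj (σ i) u ∧ i < σ.symm u) with hP
        have hPne : P.Nonempty := ⟨σ.symm x, by
          simp only [hP, Finset.mem_filter, Finset.mem_univ, true_and,
            Equiv.apply_symm_apply]
          exact ⟨hx2, hx1⟩⟩
        set m := P.max' hPne with hm
        have hmP : m ∈ P := P.max'_mem hPne
        rw [hP, Finset.mem_filter] at hmP
        have hLP : LParent G σ (σ m) u := by
          refine ⟨fun h => hne0 (Fin.ext h), hmP.2.1, by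
            simpa using hmP.2.2, ?_⟩
          intro y hy1 hy2
          have hyP : σ.symm y ∈ P := by
            simp only [hP, Finset.mem_filter, Finset.mem_univ, true_and,
              Equiv.apply_symm_apply]
            exact ⟨hy1, hy2⟩
          simpa using P.le_max' _ hyP
        by_cases hmv : σ m = v
        · rw [hmv] at hLP
          have : u = w0 := huniq u hLP
          subst this
          exact SimpleGraph.Reachable.refl _
        · have hlt : (σ.symm (σ m)).val < k := by
            rw [Equiv.symm_apply_apply]
            rw [← hk]
            exact hmP.2.2
          have hreach := IH _ hlt (σ m) rfl hmv
          refine hreach.trans (SimpleGraph.Adj.reachable ?_)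
          simp only [comap_adj, Function.Embedding.coe_subtype]
          exact hmP.2.1
    rw [SimpleGraph.connected_iff]
    refine ⟨?_, ⟨⟨w0, hw0v⟩⟩⟩
    intro x y
    obtain ⟨x1, hx1⟩ := x
    obtain ⟨y1, hy1⟩ := y
    exact (claim _ x1 rfl hx1).symm.trans (claim _ y1 rfl hy1)
  · intro hcut
    unfold CutVertex at hcut
    rw [not_not] at hcut
    set H := G.induce {w : V | w ≠ v} with hH
    -- find a neighbor w0 of v
    obtain ⟨u0, hu0⟩ := Fintype.exists_ne_of_one_lt_card (by omega) v
    obtain ⟨p⟩ := hG v u0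
    have hpnil : ¬ p.Nil := by
      rw [SimpleGraph.Walk.nil_iff_length_eq]
      intro h
      exact hu0 (p.eq_of_length_eq_zero h).symm
    set w0 := p.getVert 1 with hw0def
    have hadj : G.Adj v w0 := p.adj_snd hpnil
    have hw0v : w0 ≠ v := hadj.ne'
    set w0' : {w : V | w ≠ v} := ⟨w0, hw0v⟩ with hw0'
    -- sorting key
    set f : V → ℕ := fun u => if h : u = v then 0 else H.dist w0' ⟨u, h⟩ + 1 with hf
    have hfv : f v = 0 := by simp [hf]
    have hfpos : ∀ u : V, u ≠ v → f u ≠ 0 := by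
      intro u hu; simp [hf, hu]
    have hfeq0 : ∀ u : V, f u = 0 → u = v := by
      intro u h; by_contra hu; exact hfpos u hu h
    set e : Fin n ≃ V := (Fintype.equivFin V).symm with he
    set σ : Fin n ≃ V := (Tuple.sort (f ∘ e)).trans e with hσ
    have hmono : Monotone (f ∘ σ) := by
      have : f ∘ σ = (f ∘ e) ∘ Tuple.sort (f ∘ e) := rfl
      rw [this]
      exact Tuple.monotone_sort (f ∘ e)
    have key : ∀ a b : V, f a < f b → σ.symm a < σ.symm b := by
      intro a b hab
      by_contra h
      push_neg at h
      have := hmono h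
      simp only [Function.comp_apply, Equiv.apply_symm_apply] at this
      omega
    have hσ0 : σ 0 = v := by
      apply hfeq0
      have : f (σ 0) ≤ f (σ (σ.symm v)) := hmono (hzero_le _)
      rw [Equiv.apply_symm_apply, hfv] at this
      omega
    have hsv : σ.symm v = 0 := by rw [← hσ0, Equiv.symm_apply_apply]
    have hfw0 : f w0 = 1 := by
      simp only [hf, hw0v, dite_false]
      rw [show (⟨w0, hw0v⟩ : {w : V | w ≠ v}) = w0' from rfl]
      rw [SimpleGraph.dist_self]
    -- every u ≠ v, u ≠ w0 has an earlier neighbor ≠ v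
    have step : ∀ u : V, ∀ hu : u ≠ v, u ≠ w0 →
        ∃ z : V, z ≠ v ∧ G.Adj z u ∧ σ.symm z < σ.symm u := by
      intro u hu huw
      have hune : (⟨u, hu⟩ : {w : V | w ≠ v}) ≠ w0' := by
        intro h
        exact huw (congrArg Subtype.val h)
      obtain ⟨c, hc1, hc2⟩ := exists_closer hcut w0' ⟨u, hu⟩ hune
      refine ⟨c.1, c.2, ?_, ?_⟩
      · have := hc1
        simp only [hH, comap_adj, Function.Embedding.coe_subtype] at this
        exact this
      · apply key
        have hfu : f u = H.dist w0' ⟨u, hu⟩ + 1 := by simp [hf, hu]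
        have hcv : (c : V) ≠ v := c.2
        have hfc : f c.1 = H.dist w0' c + 1 := by simp [hf, hcv]
        rw [hfu, hfc]
        omega
    refine ⟨σ, ?_, hsv ▸ rfl, w0, ?_, ?_⟩
    · -- GS ordering
      intro u hu0'
      have hu : u ≠ v := by
        intro h; subst h; rw [hsv] at hu0'; exact hu0' rfl
      by_cases huw : u = w0
      · subst huw
        refine ⟨v, ?_, hadj⟩
        rw [hsv]
        exact hpos _ (fun h => hu0' (by rw [h, hval0]))
      · obtain ⟨z, _, hz2, hz3⟩ := step u hu huw
        exact ⟨z, hz3, hz2⟩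
    · -- LParent G σ v w0
      have hw0pos : σ.symm w0 ≠ 0 := by
        intro h
        exact hw0v (σ.symm.injective (h.trans hsv.symm))
      refine ⟨fun h => hw0pos (Fin.ext h), hadj, ?_, ?_⟩
      · rw [hsv]; exact hpos _ hw0pos
      · intro y hy1 hy2
        -- show y = v, i.e. σ.symm y = 0
        rw [hsv]
        by_contra hcon
        push_neg at hcon
        have hy0 : σ.symm y ≠ 0 := fun h => by rw [h] at hcon; exact lt_irrefl _ hcon
        have hyv : y ≠ v := fun h => hy0 (by rw [h, hsv])
        -- f y ≤ f w0 = 1 by monotone; but f y ≥ 2 unless y = w0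
        have h1 : f y ≤ f w0 := by
          have := hmono (le_of_lt hy2)
          simpa using this
        rw [hfw0] at h1
        have h2 : f y ≠ 0 := hfpos y hyv
        have h3 : f y = 1 := by omega
        have h4 : H.dist w0' ⟨y, hyv⟩ = 0 := by
          have : f y = H.dist w0' ⟨y, hyv⟩ + 1 := by simp [hf, hyv]
          omega
        have h5 : w0' = ⟨y, hyv⟩ := (hcut.dist_eq_zero_iff).mp h4
        have h6 : y = w0 := (congrArg Subtype.val h5).symm
        rw [h6] at hy2
        exact lt_irrefl _ hy2
    · -- uniqueness
      intro u hLP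
      obtain ⟨hu0', _, hu2, hu3⟩ := hLP
      by_contra huw
      have hu : u ≠ v := by
        intro h; subst h; rw [hsv] at hu0'; exact hu0' rfl
      obtain ⟨z, hz1, hz2, hz3⟩ := step u hu huw
      have := hu3 z hz2 hz3
      rw [hsv] at this
      have hz0 : σ.symm z = 0 := le_antisymm this (hzero_le _)
      exact hz1 (σ.symm.injective (hz0.trans hsv.symm))
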